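/- For the sequence x_0 = 1, x_{k+1} = x_k * sqrt(1 + 1/x_k) (the p-sequence with p = 1/2), x_k / k → 1/2 as k → ∞. -/

import Mathlib

open Filter

theorem stmt_9 (x : ℕ → ℝ)
    (h0 : x 0 = 1)
    (hrec : ∀ k, x (k + 1) = x k * Real.sqrt (1 + 1 / x k)) :
    Tendsto (fun k : ℕ => x k / (k : ℝ)) atTop (nhds (1 / 2)) := by
  -- All terms are at least 1
  have hpos : ∀ k, 1 ≤ x k := by
    intro k
    induction k with
    | zero => simp [h0]
    | succ n ih =>
      rw [hrec]
      have hxn : 0 < x n := lt_of_lt_of_le one_pos ih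
      have h1 : (1 : ℝ) ≤ Real.sqrt (1 + 1 / x n) := by
        have hle : 0 < 1 / x n := by positivity
        have := Real.sqrt_le_sqrt (show (1:ℝ) ≤ 1 + 1 / x n by linarith)
        rwa [Real.sqrt_one] at this
      calc (1:ℝ) = 1 * 1 := by ring
        _ ≤ x n * Real.sqrt (1 + 1 / x n) :=
          mul_le_mul ih h1 zero_le_one hxn.le
  have hx0 : ∀ k, 0 < x k := fun k => lt_of_lt_of_le one_pos (hpos k)
  -- squared recursion
  have hsq : ∀ k, x (k + 1) ^ 2 = x k ^ 2 + x k := by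
    intro k
    have hkpos := hx0 k
    have hk := hkpos.ne'
    have hnn : (0:ℝ) ≤ 1 + 1 / x k := by
      have : 0 < 1 / x k := by positivity
      linarith
    rw [hrec, mul_pow, Real.sq_sqrt hnn]
    field_simp
  -- lower bound x k ^ 2 ≥ 1 + k
  have hlb : ∀ k : ℕ, 1 + (k : ℝ) ≤ x k ^ 2 := by
    intro k
    induction k with
    | zero => simp [h0]
    | succ n ih =>
      rw [hsq]
      push_cast
      have := hpos n
      linarith
  -- x tends to infinity
  have hinf : Tendsto x atTop atTop := by
    rw [tendsto_atTop]
    intro M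
    obtain ⟨N, hN⟩ := exists_nat_ge (M ^ 2)
    filter_upwards [eventually_ge_atTop N] with k hk
    rcases le_or_gt M 0 with hM | hM
    · exact hM.trans (hx0 k).le
    · have hkN : (N : ℝ) ≤ (k : ℝ) := Nat.cast_le.mpr hk
      nlinarith [hlb k, hx0 k]
  -- the difference sequence
  set d : ℕ → ℝ := fun k => x (k + 1) - x k with hd
  have hdval : ∀ k, d k = 1 / (Real.sqrt (1 + 1 / x k) + 1) := by
    intro k
    have hxk := hx0 k
    set s := Real.sqrt (1 + 1 / x k) with hsdef
    have hsnn : 0 ≤ s := Real.sqrt_nonneg _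
    have hs : (0:ℝ) < s + 1 := by linarith
    have hs2 : s ^ 2 = 1 + 1 / x k := by
      rw [hsdef]
      apply Real.sq_sqrt
      have : 0 < 1 / x k := by positivity
      linarith
    rw [hd]
    simp only
    rw [hrec, eq_div_iff hs.ne']
    have hexp : (x k * s - x k) * (s + 1) = x k * (s ^ 2 - 1) := by ring
    rw [hexp, hs2]
    field_simp
    ring
  -- d tends to 1/2
  have hdt : Tendsto d atTop (nhds (1 / 2)) := by
    have h1 : Tendsto (fun k => 1 / x k) atTop (nhds 0) :=
      tendsto_inv_atTop_zero.comp hinf |>.congr (fun k => (one_div _).symm)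
    have hcont : ContinuousAt (fun t : ℝ => 1 / (Real.sqrt (1 + t) + 1)) 0 := by
      apply ContinuousAt.div continuousAt_const
      · exact ((Real.continuous_sqrt.comp (continuous_const.add continuous_id)).add
          continuous_const).continuousAt
      · simp [Real.sqrt_one]
    have h2 := hcont.tendsto.comp h1
    simp only [Function.comp_def] at h2
    have hlim : (1:ℝ) / (Real.sqrt (1 + 0) + 1) = 1 / 2 := by
      norm_num
    rw [hlim] at h2
    exact h2.congr (fun k => (hdval k).symm)
  -- Cesàro average
  have hces := hdt.cesaro
  have hsum : ∀ n, ∑ i ∈ Finset.range n, d i = x n - 1 := by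
    intro n
    rw [hd]
    rw [Finset.sum_range_sub (f := x), h0]
  simp only [hsum] at hces
  have h1n : Tendsto (fun n : ℕ => (n : ℝ)⁻¹) atTop (nhds 0) :=
    tendsto_inv_atTop_zero.comp tendsto_natCast_atTop_atTop
  have hfin : Tendsto (fun n : ℕ => (n:ℝ)⁻¹ * (x n - 1) + (n:ℝ)⁻¹) atTop (nhds (1/2 + 0)) :=
    hces.add h1n
  rw [add_zero] at hfin
  apply hfin.congr'
  filter_upwards [eventually_ne_atTop 0] with n hn
  have hnr : (n:ℝ) ≠ 0 := Nat.cast_ne_zero.mpr hn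
  field_simp
  ring
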